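/- Suppose M ∈ ℂ^{n×n} is condiagonalizable, M = X Λ (X̄)^{-1} with X invertible and Λ diagonal, let κ ∈ ℂ and b ∈ ℂ^n, and let D be a unitary diagonal matrix such that D^{-1} X^{-1} b ∈ ℝ^n. Set Â = D^{-1} Λ D̄ (a diagonal matrix) and let σ(Â) denote the set of its diagonal entries. Then for every j ≥ 1, min over z ∈ K_j(M_κ; b) of ‖M_κ z − b‖ ≤ κ₂(X) · ( min over p ∈ P_{j−1}(r2) of max over λ ∈ σ(Â) of |κ p(λ) + λ · conj(p(λ)) − 1| ) · ‖b‖, where κ₂(X) = ‖X‖·‖X^{-1}‖ is the condition number in the spectral (operator 2-) norm. -/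

import Mathlib

/-- The antilinear map `z ↦ M z̄`. -/
noncomputable def antiMul {n : ℕ} (M : Matrix (Fin n) (Fin n) ℂ) (z : Fin n → ℂ) : Fin n → ℂ :=
  M.mulVec (star z)

/-- The Krylov subspace `K_j(M_κ; b) = span{b, M_0 b, …, M_0^{j-1} b}` (independent of `κ`),
where `M_0 z = M z̄`. -/
noncomputable def krylov {n : ℕ} (M : Matrix (Fin n) (Fin n) ℂ) (b : Fin n → ℂ) (j : ℕ) :
    Submodule ℂ (Fin n → ℂ) :=
  Submodule.span ℂ ((fun k => (antiMul M)^[k] b) '' Set.Iio j)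

/-- The Euclidean norm on `ℂⁿ`. -/
noncomputable def enorm2 {n : ℕ} (v : Fin n → ℂ) : ℝ :=
  Real.sqrt (∑ i, ‖v i‖ ^ 2)

/-- The spectral (operator 2-) norm of a matrix. -/
noncomputable def opNorm2 {n : ℕ} (A : Matrix (Fin n) (Fin n) ℂ) : ℝ :=
  ‖Matrix.toEuclideanCLM (𝕜 := ℂ) (n := Fin n) A‖

/-- Evaluation of the polyanalytic polynomial in `P_j(r2)` with coefficients `α`
(supported in `{0,…,j}`):  `p(λ) = ∑_{k=0}^{⌊j/2⌋} (α_{2k} + α_{2k+1} λ)|λ|^{2k}`. -/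
noncomputable def evalR2 (j : ℕ) (α : ℕ → ℂ) (z : ℂ) : ℂ :=
  ∑ k ∈ Finset.range (j / 2 + 1), (α (2 * k) + α (2 * k + 1) * z) * ((‖z‖ : ℝ) : ℂ) ^ (2 * k)

/-! ### Auxiliary lemmas -/

lemma enorm2_eq {n : ℕ} (v : Fin n → ℂ) :
    enorm2 v = ‖(WithLp.equiv 2 (Fin n → ℂ)).symm v‖ := by
  rw [EuclideanSpace.norm_eq]
  simp [enorm2]

lemma enorm2_nonneg {n : ℕ} (v : Fin n → ℂ) : 0 ≤ enorm2 v := Real.sqrt_nonneg _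

lemma enorm2_mulVec_le {n : ℕ} (A : Matrix (Fin n) (Fin n) ℂ) (v : Fin n → ℂ) :
    enorm2 (A.mulVec v) ≤ opNorm2 A * enorm2 v := by
  rw [enorm2_eq, enorm2_eq]
  have h := (Matrix.toEuclideanCLM (𝕜 := ℂ) (n := Fin n) A).le_opNorm
    ((WithLp.equiv 2 (Fin n → ℂ)).symm v)
  exact h

lemma isDiag_mulVec {n : ℕ} {A : Matrix (Fin n) (Fin n) ℂ} (hA : A.IsDiag)
    (v : Fin n → ℂ) (i : Fin n) : A.mulVec v i = A i i * v i := by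
  rw [Matrix.mulVec, dotProduct, Finset.sum_eq_single i]
  · intro k _ hk; rw [hA (Ne.symm hk), zero_mul]
  · intro h; exact absurd (Finset.mem_univ i) h

lemma isDiag_mul_apply {n : ℕ} {A : Matrix (Fin n) (Fin n) ℂ} (hA : A.IsDiag)
    (B : Matrix (Fin n) (Fin n) ℂ) (i k : Fin n) : (A * B) i k = A i i * B i k := by
  rw [Matrix.mul_apply, Finset.sum_eq_single i]
  · intro l _ hl; rw [hA (Ne.symm hl), zero_mul]
  · intro h; exact absurd (Finset.mem_univ i) h

lemma isDiag_mul {n : ℕ} {A B : Matrix (Fin n) (Fin n) ℂ} (hA : A.IsDiag) (hB : B.IsDiag) :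
    (A * B).IsDiag := by
  intro i k hik
  rw [isDiag_mul_apply hA, hB hik, mul_zero]

lemma star_mulVec' {n : ℕ} (A : Matrix (Fin n) (Fin n) ℂ) (v : Fin n → ℂ) :
    star (A.mulVec v) = (A.map (starRingEnd ℂ)).mulVec (star v) := by
  funext i
  simp [Matrix.mulVec, dotProduct, Matrix.map_apply, star_sum, star_mul', Pi.star_apply]

/-- The polyanalytic monomials `1, λ, |λ|², λ|λ|², |λ|⁴, …` defined by the recursion
`φ₀ = 1`, `φ_{k+1}(λ) = λ · conj(φ_k(λ))`. -/
noncomputable def phiR2 : ℕ → ℂ → ℂ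
  | 0, _ => 1
  | (k+1), z => z * (starRingEnd ℂ) (phiR2 k z)

lemma phiR2_even_odd (m : ℕ) (z : ℂ) :
    phiR2 (2*m) z = (((‖z‖ : ℝ) : ℂ)) ^ (2*m) ∧
    phiR2 (2*m+1) z = z * (((‖z‖ : ℝ) : ℂ)) ^ (2*m) := by
  have hr : ∀ k : ℕ, (starRingEnd ℂ) ((((‖z‖ : ℝ) : ℂ)) ^ k) = (((‖z‖ : ℝ) : ℂ)) ^ k := by
    intro k; rw [map_pow, Complex.conj_ofReal]
  have hsq : z * (starRingEnd ℂ) z = ((‖z‖ : ℝ) : ℂ) ^ 2 := by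
    rw [Complex.mul_conj, ← Complex.sq_norm]; push_cast; ring
  induction m with
  | zero =>
    constructor
    · simp [phiR2]
    · show z * (starRingEnd ℂ) (phiR2 0 z) = _
      simp [phiR2]
  | succ m ih =>
    have heven : phiR2 (2*(m+1)) z = (((‖z‖ : ℝ) : ℂ)) ^ (2*(m+1)) := by
      have h1 : 2*(m+1) = (2*m+1) + 1 := by ring
      rw [h1]
      show z * (starRingEnd ℂ) (phiR2 (2*m+1) z) = _
      rw [ih.2, map_mul, hr]
      calc z * ((starRingEnd ℂ) z * ((‖z‖ : ℝ) : ℂ) ^ (2*m))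
          = (z * (starRingEnd ℂ) z) * ((‖z‖ : ℝ) : ℂ) ^ (2*m) := by ring
        _ = ((‖z‖ : ℝ) : ℂ) ^ 2 * ((‖z‖ : ℝ) : ℂ) ^ (2*m) := by rw [hsq]
        _ = ((‖z‖ : ℝ) : ℂ) ^ ((2*m+1)+1) := by rw [← pow_add]; ring_nf
    refine ⟨heven, ?_⟩
    show z * (starRingEnd ℂ) (phiR2 (2*(m+1)) z) = _
    rw [heven, hr]

lemma sum_range_two_mul {M : Type*} [AddCommMonoid M] (N : ℕ) (f : ℕ → M) :
    ∑ k ∈ Finset.range (2*N), f k = ∑ m ∈ Finset.range N, (f (2*m) + f (2*m+1)) := by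
  induction N with
  | zero => simp
  | succ N ih =>
    have h : 2*(N+1) = (2*N + 1) + 1 := by ring
    rw [h, Finset.sum_range_succ, Finset.sum_range_succ, ih, Finset.sum_range_succ, add_assoc]

lemma evalR2_eq_sum (j : ℕ) (α : ℕ → ℂ) (z : ℂ) :
    evalR2 j α z = ∑ k ∈ Finset.range (2*(j/2+1)), α k * phiR2 k z := by
  rw [sum_range_two_mul]
  unfold evalR2
  refine Finset.sum_congr rfl fun m _ => ?_
  rw [(phiR2_even_odd m z).1, (phiR2_even_odd m z).2]; ring

theorem rlinear_gmres_bound {n : ℕ} (j : ℕ) (hj : 1 ≤ j) (κ : ℂ)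
    (M X Λ D : Matrix (Fin n) (Fin n) ℂ) (b : Fin n → ℂ)
    (hX : IsUnit X) (hΛ : Λ.IsDiag)
    (hM : M = X * Λ * (X.map (starRingEnd ℂ))⁻¹)
    (hD : D ∈ Matrix.unitaryGroup (Fin n) ℂ) (hDdiag : D.IsDiag)
    (hb : ∀ i, ((D⁻¹.mulVec (X⁻¹.mulVec b)) i).im = 0) :
    sInf {t : ℝ | ∃ z ∈ krylov M b j, t = enorm2 (κ • z + M.mulVec (star z) - b)} ≤
      (opNorm2 X * opNorm2 X⁻¹) *
        sInf {t : ℝ | ∃ α : ℕ → ℂ, (∀ k, j - 1 < k → α k = 0) ∧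
          t = ⨆ i : Fin n,
            ‖κ * evalR2 (j - 1) α ((D⁻¹ * Λ * D.map (starRingEnd ℂ)) i i) +
              ((D⁻¹ * Λ * D.map (starRingEnd ℂ)) i i) *
                (starRingEnd ℂ) (evalR2 (j - 1) α ((D⁻¹ * Λ * D.map (starRingEnd ℂ)) i i)) - 1‖} *
        enorm2 b := by
  classical
  -- notation
  set lam : Fin n → ℂ := fun i => (D⁻¹ * Λ * D.map (starRingEnd ℂ)) i i with hlam
  set d : Fin n → ℂ := D⁻¹.mulVec (X⁻¹.mulVec b) with hdd
  -- basic invertibility facts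
  have hdetX : IsUnit X.det := (Matrix.isUnit_iff_isUnit_det X).1 hX
  have hXX : X * X⁻¹ = 1 := Matrix.mul_nonsing_inv X hdetX
  have hXXl : X⁻¹ * X = 1 := Matrix.nonsing_inv_mul X hdetX
  have hXcUnit : IsUnit (X.map (starRingEnd ℂ)) := by
    refine ⟨⟨X.map (starRingEnd ℂ), X⁻¹.map (starRingEnd ℂ), ?_, ?_⟩, rfl⟩
    · rw [← Matrix.map_mul, hXX, Matrix.map_one _ (map_zero _) (map_one _)]
    · rw [← Matrix.map_mul, hXXl, Matrix.map_one _ (map_zero _) (map_one _)]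
  have hMXc : M * X.map (starRingEnd ℂ) = X * Λ := by
    rw [hM, Matrix.mul_assoc, Matrix.nonsing_inv_mul _
      ((Matrix.isUnit_iff_isUnit_det _).1 hXcUnit), Matrix.mul_one]
  -- facts about D
  have hDinv : D⁻¹ = star D := Matrix.inv_eq_left_inv ((Matrix.mem_unitaryGroup_iff').1 hD)
  have hDD : D * D⁻¹ = 1 := by rw [hDinv]; exact (Matrix.mem_unitaryGroup_iff).1 hD
  have hDinvDiag : D⁻¹.IsDiag := by
    rw [hDinv]
    intro i k hik
    rw [Matrix.star_eq_conjTranspose, Matrix.conjTranspose_apply, hDdiag (Ne.symm hik), star_zero]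
  have hDinv_apply : ∀ i, D⁻¹ i i = (starRingEnd ℂ) (D i i) := by
    intro i
    rw [hDinv, Matrix.star_eq_conjTranspose, Matrix.conjTranspose_apply]
    rfl
  have hDu : ∀ i, D i i * (starRingEnd ℂ) (D i i) = 1 := by
    intro i
    have h1 : (D * D⁻¹) i i = 1 := by rw [hDD]; exact Matrix.one_apply_eq i
    rwa [isDiag_mul_apply hDdiag, hDinv_apply] at h1
  have hDabs : ∀ i, ‖D i i‖ = 1 := by
    intro i
    have h := congrArg (fun w : ℂ => ‖w‖) (hDu i)
    simp only [norm_mul, Complex.norm_conj, norm_one] at h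
    rcases mul_self_eq_one_iff.1 h with h' | h'
    · exact h'
    · nlinarith [norm_nonneg (D i i)]
  -- b in the transformed coordinates
  have hb_eq : b = X.mulVec (D.mulVec d) := by
    rw [hdd, Matrix.mulVec_mulVec, Matrix.mulVec_mulVec, Matrix.mulVec_mulVec,
      Matrix.mul_assoc X D D⁻¹, hDD, Matrix.mul_one, hXX, Matrix.one_mulVec]
  have hd_real : ∀ i, (starRingEnd ℂ) (d i) = d i := fun i => Complex.conj_eq_iff_im.2 (hb i)
  have hXD : ∀ u w : Fin n → ℂ, (∀ i, u i = w i) →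
      X.mulVec (D.mulVec u) = X.mulVec (D.mulVec w) := by
    intro u w h
    have : u = w := funext h
    rw [this]
  -- the key intertwining identity
  have hDcDiag : (D.map (starRingEnd ℂ)).IsDiag := by
    intro i k hik
    rw [Matrix.map_apply, hDdiag hik, map_zero]
  have hkey : ∀ v : Fin n → ℂ,
      M.mulVec (star (X.mulVec (D.mulVec v))) =
        X.mulVec (D.mulVec (fun i => lam i * (starRingEnd ℂ) (v i))) := by
    intro v
    calc M.mulVec (star (X.mulVec (D.mulVec v)))
        = M.mulVec ((X.map (starRingEnd ℂ)).mulVec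
            ((D.map (starRingEnd ℂ)).mulVec (star v))) := by
          rw [star_mulVec', star_mulVec']
      _ = ((M * X.map (starRingEnd ℂ)) * D.map (starRingEnd ℂ)).mulVec (star v) := by
          rw [Matrix.mulVec_mulVec, Matrix.mulVec_mulVec]
      _ = ((X * Λ) * D.map (starRingEnd ℂ)).mulVec (star v) := by rw [hMXc]
      _ = X.mulVec ((Λ * D.map (starRingEnd ℂ)).mulVec (star v)) := by
          rw [Matrix.mulVec_mulVec, Matrix.mul_assoc]
      _ = X.mulVec (D.mulVec (fun i => lam i * (starRingEnd ℂ) (v i))) := by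
          suffices h : (Λ * D.map (starRingEnd ℂ)).mulVec (star v) =
              D.mulVec (fun i => lam i * (starRingEnd ℂ) (v i)) by rw [h]
          funext i
          rw [isDiag_mulVec (isDiag_mul hΛ hDcDiag), isDiag_mul_apply hΛ,
            isDiag_mulVec hDdiag]
          have hlami : lam i = D⁻¹ i i * Λ i i * (D.map (starRingEnd ℂ)) i i := by
            show (D⁻¹ * Λ * D.map (starRingEnd ℂ)) i i = _
            rw [isDiag_mul_apply (isDiag_mul hDinvDiag hΛ), isDiag_mul_apply hDinvDiag]
          rw [hlami, hDinv_apply, Matrix.map_apply, Pi.star_apply]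
          simp only [← starRingEnd_apply]
          linear_combination (-(Λ i i * (starRingEnd ℂ) (D i i) * (starRingEnd ℂ) (v i))) * hDu i
  -- explicit form of the Krylov iterates
  have hiter : ∀ k, (antiMul M)^[k] b =
      X.mulVec (D.mulVec (fun i => phiR2 k (lam i) * d i)) := by
    intro k
    induction k with
    | zero =>
      simp only [Function.iterate_zero, id_eq]
      rw [hb_eq]
      refine hXD _ _ fun i => ?_
      show d i = phiR2 0 (lam i) * d i
      rw [show phiR2 0 (lam i) = 1 from rfl, one_mul]
    | succ k ih =>
      rw [Function.iterate_succ_apply', ih]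
      show M.mulVec (star _) = _
      rw [hkey]
      refine hXD _ _ fun i => ?_
      show lam i * (starRingEnd ℂ) (phiR2 k (lam i) * d i) = phiR2 (k+1) (lam i) * d i
      rw [map_mul, hd_real i,
        show phiR2 (k+1) (lam i) = lam i * (starRingEnd ℂ) (phiR2 k (lam i)) from rfl]
      ring
  -- set up the infima
  set SL : Set ℝ := {t : ℝ | ∃ z ∈ krylov M b j, t = enorm2 (κ • z + M.mulVec (star z) - b)}
    with hSL
  have hSLne : SL.Nonempty := ⟨enorm2 (κ • 0 + M.mulVec (star (0 : Fin n → ℂ)) - b),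
    0, Submodule.zero_mem _, rfl⟩
  have hSLbdd : BddBelow SL := by
    refine ⟨0, ?_⟩
    rintro t ⟨z, hz, rfl⟩
    exact enorm2_nonneg _
  have hcX : 0 ≤ opNorm2 X := norm_nonneg _
  have hcXi : 0 ≤ opNorm2 X⁻¹ := norm_nonneg _
  have hbn : 0 ≤ enorm2 b := enorm2_nonneg _
  set c : ℝ := opNorm2 X * opNorm2 X⁻¹ * enorm2 b with hc
  have hc0 : 0 ≤ c := by positivity
  -- main estimate: for each admissible polynomial, a Krylov vector achieving the bound
  have hmain : ∀ t ∈ {t : ℝ | ∃ α : ℕ → ℂ, (∀ k, j - 1 < k → α k = 0) ∧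
          t = ⨆ i : Fin n,
            ‖κ * evalR2 (j - 1) α (lam i) +
              lam i * (starRingEnd ℂ) (evalR2 (j - 1) α (lam i)) - 1‖},
      sInf SL ≤ c * t := by
    rintro t ⟨α, hα, rfl⟩
    set p : Fin n → ℂ := fun i => evalR2 (j - 1) α (lam i) with hp
    set S : ℝ := ⨆ i : Fin n, ‖κ * p i + lam i * (starRingEnd ℂ) (p i) - 1‖ with hS
    have hS0 : 0 ≤ S := Real.iSup_nonneg fun i => norm_nonneg _
    have hSle : ∀ i, ‖κ * p i + lam i * (starRingEnd ℂ) (p i) - 1‖ ≤ S := by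
      intro i
      rw [hS]
      exact le_ciSup (f := fun i => ‖κ * p i + lam i * (starRingEnd ℂ) (p i) - 1‖)
        (Set.Finite.bddAbove (Set.finite_range _)) i
    set N : ℕ := (j - 1) / 2 + 1 with hN
    set z : Fin n → ℂ := X.mulVec (D.mulVec (fun i => p i * d i)) with hz
    -- z as a linear combination of Krylov iterates
    have hz_sum : z = ∑ k ∈ Finset.range (2 * N), α k • (antiMul M)^[k] b := by
      have h1 : ∀ k, α k • (antiMul M)^[k] b =
          X.mulVec (D.mulVec (α k • fun i => phiR2 k (lam i) * d i)) := by
        intro k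
        rw [hiter k, Matrix.mulVec_smul, Matrix.mulVec_smul]
      calc z = X.mulVec (D.mulVec (∑ k ∈ Finset.range (2 * N),
            α k • fun i => phiR2 k (lam i) * d i)) := by
            rw [hz]
            refine hXD _ _ fun i => ?_
            show evalR2 (j - 1) α (lam i) * d i = _
            rw [Finset.sum_apply]
            simp only [Pi.smul_apply, smul_eq_mul]
            rw [evalR2_eq_sum, ← hN, Finset.sum_mul]
            exact Finset.sum_congr rfl fun k _ => by ring
        _ = ∑ k ∈ Finset.range (2 * N), α k • (antiMul M)^[k] b := by
            rw [← Matrix.mulVecLin_apply, ← Matrix.mulVecLin_apply, map_sum, map_sum]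
            exact Finset.sum_congr rfl fun k _ => by
              rw [Matrix.mulVecLin_apply, Matrix.mulVecLin_apply, h1 k]
    have hz_mem : z ∈ krylov M b j := by
      rw [hz_sum]
      refine Submodule.sum_mem _ fun k _ => ?_
      by_cases hkj : k < j
      · exact Submodule.smul_mem _ _
          (Submodule.subset_span ⟨k, Set.mem_Iio.2 hkj, rfl⟩)
      · rw [hα k (by omega), zero_smul]
        exact Submodule.zero_mem _
    -- the residual in transformed coordinates
    have hres : κ • z + M.mulVec (star z) - b =
        X.mulVec (D.mulVec (fun i => (κ * p i + lam i * (starRingEnd ℂ) (p i) - 1) * d i)) := by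
      rw [hz, hkey, hb_eq, ← Matrix.mulVec_smul, ← Matrix.mulVec_smul, ← Matrix.mulVec_add,
        ← Matrix.mulVec_add, ← Matrix.mulVec_sub, ← Matrix.mulVec_sub]
      refine hXD _ _ fun i => ?_
      simp only [Pi.add_apply, Pi.sub_apply, Pi.smul_apply, smul_eq_mul]
      rw [map_mul, hd_real i]
      ring
    -- norm estimates
    have hstep1 : enorm2 (κ • z + M.mulVec (star z) - b) ≤
        opNorm2 X * enorm2 (D.mulVec (fun i => (κ * p i + lam i * (starRingEnd ℂ) (p i) - 1) * d i)) := by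
      rw [hres]; exact enorm2_mulVec_le _ _
    have hstep2 : enorm2 (D.mulVec (fun i => (κ * p i + lam i * (starRingEnd ℂ) (p i) - 1) * d i)) =
        enorm2 (fun i => (κ * p i + lam i * (starRingEnd ℂ) (p i) - 1) * d i) := by
      unfold enorm2
      congr 1
      refine Finset.sum_congr rfl fun i _ => ?_
      rw [isDiag_mulVec hDdiag, norm_mul, hDabs i, one_mul]
    have hstep3 : enorm2 (fun i => (κ * p i + lam i * (starRingEnd ℂ) (p i) - 1) * d i) ≤
        S * enorm2 d := by
      unfold enorm2
      rw [← Real.sqrt_sq hS0, ← Real.sqrt_mul (by positivity)]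
      apply Real.sqrt_le_sqrt
      rw [Finset.mul_sum]
      refine Finset.sum_le_sum fun i _ => ?_
      rw [norm_mul, mul_pow]
      have h1 : ‖κ * p i + lam i * (starRingEnd ℂ) (p i) - 1‖ ^ 2 ≤ S ^ 2 :=
        pow_le_pow_left₀ (norm_nonneg _) (hSle i) 2
      exact mul_le_mul_of_nonneg_right h1 (by positivity)
    have hstep4 : enorm2 d ≤ opNorm2 X⁻¹ * enorm2 b := by
      have h1 : enorm2 d = enorm2 (X⁻¹.mulVec b) := by
        rw [hdd]
        unfold enorm2
        congr 1
        refine Finset.sum_congr rfl fun i _ => ?_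
        rw [isDiag_mulVec hDinvDiag, norm_mul, hDinv_apply, Complex.norm_conj, hDabs i, one_mul]
      rw [h1]
      exact enorm2_mulVec_le _ _
    have hchain : enorm2 (κ • z + M.mulVec (star z) - b) ≤ c * S := by
      calc enorm2 (κ • z + M.mulVec (star z) - b)
          ≤ opNorm2 X * enorm2 (D.mulVec (fun i =>
              (κ * p i + lam i * (starRingEnd ℂ) (p i) - 1) * d i)) := hstep1
        _ = opNorm2 X * enorm2 (fun i =>
              (κ * p i + lam i * (starRingEnd ℂ) (p i) - 1) * d i) := by rw [hstep2]
        _ ≤ opNorm2 X * (S * enorm2 d) := by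
            exact mul_le_mul_of_nonneg_left hstep3 hcX
        _ ≤ opNorm2 X * (S * (opNorm2 X⁻¹ * enorm2 b)) := by
            refine mul_le_mul_of_nonneg_left ?_ hcX
            exact mul_le_mul_of_nonneg_left hstep4 hS0
        _ = c * S := by rw [hc]; ring
    exact le_trans (csInf_le hSLbdd ⟨z, hz_mem, rfl⟩) hchain
  -- conclude by passing to the infimum on the right
  set SR : Set ℝ := {t : ℝ | ∃ α : ℕ → ℂ, (∀ k, j - 1 < k → α k = 0) ∧
          t = ⨆ i : Fin n,
            ‖κ * evalR2 (j - 1) α (lam i) +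
              lam i * (starRingEnd ℂ) (evalR2 (j - 1) α (lam i)) - 1‖} with hSR
  have hSRne : SR.Nonempty := ⟨_, fun _ => 0, fun k _ => rfl, rfl⟩
  have hgoal : sInf SL ≤ c * sInf SR := by
    rcases eq_or_lt_of_le hc0 with hc' | hc'
    · obtain ⟨t0, ht0⟩ := hSRne
      have h1 := hmain t0 ht0
      rw [← hc'] at h1 ⊢
      rw [zero_mul] at h1 ⊢
      exact h1
    · have h1 : sInf SL / c ≤ sInf SR := by
        refine le_csInf hSRne fun t ht => ?_
        rw [div_le_iff₀ hc']
        rw [mul_comm]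
        exact hmain t ht
      calc sInf SL = c * (sInf SL / c) := by field_simp
        _ ≤ c * sInf SR := mul_le_mul_of_nonneg_left h1 (le_of_lt hc')
  calc sInf SL ≤ c * sInf SR := hgoal
    _ = (opNorm2 X * opNorm2 X⁻¹) * sInf SR * enorm2 b := by rw [hc]; ring
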